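/- For ν ≥ −1/2 and t, x ≥ 0, |(tx)^{−ν/2} J_ν(2√(tx))| ≤ 1/Γ(ν+1), where the left side is interpreted via the power series Σ_{j≥0} (−1)^j (tx)^j/(j! Γ(ν+1+j)). -/

import Mathlib

open Real

/-- The entire Hankel kernel: `hankelKernel ν u = Σ_{j≥0} (−1)^j u^j/(j! Γ(ν+1+j))`,
which equals `u^{−ν/2} J_ν(2√u)` for `u > 0`. -/
noncomputable def hankelKernel (ν u : ℝ) : ℝ :=
  ∑' j : ℕ, (-1 : ℝ) ^ j * u ^ j / ((Nat.factorial j : ℝ) * Real.Gamma (ν + 1 + j))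

open MeasureTheory Set

lemma gamma_nat_add_half (j : ℕ) :
    Real.Gamma (j + 1/2) = (Nat.factorial (2*j)) * √π / (4^j * Nat.factorial j) := by
  induction j with
  | zero => rw [show ((0:ℕ):ℝ) + 1/2 = 1/2 by norm_num, Real.Gamma_one_half_eq]; simp
  | succ n ih =>
    have h1 : ((n+1 : ℕ) : ℝ) + 1/2 = (n + 1/2) + 1 := by push_cast; ring
    rw [h1, Real.Gamma_add_one (by positivity), ih]
    have h2 : (2*(n+1)) = (2*n+1) + 1 := by ring
    rw [h2, Nat.factorial_succ, Nat.factorial_succ, Nat.factorial_succ]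
    push_cast
    have h4 : (4:ℝ)^(n+1) = 4 * 4^n := by ring
    rw [h4]
    field_simp
    ring

lemma real_beta (a b : ℝ) (ha : 0 < a) (hb : 0 < b) :
    ∫ x in (0:ℝ)..1, x ^ (a-1) * (1-x) ^ (b-1) =
      Real.Gamma a * Real.Gamma b / Real.Gamma (a+b) := by
  have key := Complex.Gamma_mul_Gamma_eq_betaIntegral (s := (a:ℂ)) (t := (b:ℂ))
    (by simpa using ha) (by simpa using hb)
  have hβ : Complex.betaIntegral a b =
      ((∫ x in (0:ℝ)..1, x ^ (a-1) * (1-x) ^ (b-1) : ℝ) : ℂ) := by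
    rw [Complex.betaIntegral, ← intervalIntegral.integral_ofReal]
    refine intervalIntegral.integral_congr fun x hx => ?_
    rw [Set.uIcc_of_le (by norm_num : (0:ℝ) ≤ 1)] at hx
    push_cast
    rw [Complex.ofReal_cpow hx.1, Complex.ofReal_cpow (by linarith [hx.2])]
    push_cast
    ring
  rw [hβ, ← Complex.ofReal_add, Complex.Gamma_ofReal, Complex.Gamma_ofReal,
    Complex.Gamma_ofReal, ← Complex.ofReal_mul, ← Complex.ofReal_mul] at key
  have h3 : Real.Gamma a * Real.Gamma b =
      Real.Gamma (a+b) * ∫ x in (0:ℝ)..1, x ^ (a-1) * (1-x) ^ (b-1) := by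
    exact_mod_cast key
  have hG : (0:ℝ) < Real.Gamma (a+b) := Real.Gamma_pos_of_pos (by linarith)
  field_simp
  linarith [h3]

lemma one_add_rpow_le (p s : ℝ) (h0 : 0 ≤ s) (h1 : s ≤ 1) : (1+s)^p ≤ 2^p + 1 := by
  rcases le_or_gt 0 p with hp | hp
  · have : (1+s)^p ≤ 2^p := Real.rpow_le_rpow (by linarith) (by linarith) hp
    linarith
  · have h2 : (1+s)^p ≤ 1 := Real.rpow_le_one_of_one_le_of_nonpos (by linarith) hp.le
    have : (0:ℝ) ≤ 2^p := Real.rpow_nonneg (by norm_num) p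
    linarith

lemma integrableOn_aux (p : ℝ) (hp : -1 < p) (j : ℕ) :
    IntegrableOn (fun s : ℝ => s^(2*j) * (1-s^2)^p) (Set.Icc 0 1) := by
  have hdom : IntegrableOn (fun s : ℝ => (2^p+1) * (1-s)^p) (Set.Icc 0 1) := by
    have h0 : IntervalIntegrable (fun s : ℝ => (1-s)^p) volume (1-1) (1-0) :=
      ((intervalIntegral.intervalIntegrable_rpow' (a := 0) (b := 1) hp).comp_sub_left 1).symm
    norm_num at h0
    exact (intervalIntegrable_iff_integrableOn_Icc_of_le (by norm_num)).mp (h0.const_mul _)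
  refine MeasureTheory.Integrable.mono hdom ?_ ?_
  · exact Measurable.aestronglyMeasurable (by measurability)
  · filter_upwards [ae_restrict_mem measurableSet_Icc] with s hs
    obtain ⟨h0, h1⟩ := hs
    have hs2 : (0:ℝ) ≤ 1 - s^2 := by nlinarith
    have hsp : (0:ℝ) ≤ s^(2*j) := by positivity
    have e1 : (1 - s^2 : ℝ) = (1-s)*(1+s) := by ring
    have e2 : (1-s^2)^p = (1-s)^p * (1+s)^p := by
      rw [e1, Real.mul_rpow (by linarith) (by linarith)]
    have b1 : s^(2*j) ≤ 1 := pow_le_one₀ h0 h1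
    have b2 : (1+s)^p ≤ 2^p+1 := one_add_rpow_le p s h0 h1
    have nn1 : (0:ℝ) ≤ (1-s)^p := Real.rpow_nonneg (by linarith) p
    have nn2 : (0:ℝ) ≤ (1-s^2)^p := Real.rpow_nonneg hs2 p
    rw [Real.norm_of_nonneg (by positivity), Real.norm_of_nonneg (by positivity)]
    calc s^(2*j) * (1-s^2)^p ≤ 1 * (1-s^2)^p := by
          exact mul_le_mul_of_nonneg_right b1 nn2
      _ = (1-s)^p * (1+s)^p := by rw [one_mul, e2]
      _ ≤ (1-s)^p * (2^p+1) := mul_le_mul_of_nonneg_left b2 nn1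
      _ = (2^p+1) * (1-s)^p := by ring

lemma integrableOn_beta (a b : ℝ) (ha : 0 < a) (hb : 0 < b) :
    IntegrableOn (fun x : ℝ => x^(a-1) * (1-x)^(b-1)) (Icc 0 1) := by
  have h := Complex.betaIntegral_convergent (u := (a:ℂ)) (v := (b:ℂ)) (by simpa) (by simpa)
  rw [intervalIntegrable_iff_integrableOn_Ioc_of_le (by norm_num)] at h
  have h2 := h.re
  rw [integrableOn_Icc_iff_integrableOn_Ioc]
  refine IntegrableOn.congr_fun h2 (fun x hx => ?_) measurableSet_Ioc
  have h1x : (0:ℝ) ≤ 1 - x := by linarith [hx.2]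
  have e1 : ((a:ℂ) - 1) = ((a - 1 : ℝ) : ℂ) := by push_cast; ring
  have e2 : ((b:ℂ) - 1) = ((b - 1 : ℝ) : ℂ) := by push_cast; ring
  have e3 : (1 - (x:ℂ)) = ((1 - x : ℝ) : ℂ) := by push_cast; ring
  simp only [e1, e2, e3, ← Complex.ofReal_cpow hx.1.le, ← Complex.ofReal_cpow h1x,
    ← Complex.ofReal_mul]
  exact Complex.ofReal_re _
lemma beta_sub (p : ℝ) (hp : -1 < p) (j : ℕ) :
    ∫ s in (0:ℝ)..1, s^(2*j) * (1-s^2)^p =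
      Real.Gamma ((j:ℝ)+1/2) * Real.Gamma (p+1) / (2 * Real.Gamma (((j:ℝ)+1/2)+(p+1))) := by
  set a : ℝ := (j:ℝ) + 1/2 with ha_def
  set b : ℝ := p + 1 with hb_def
  have ha : 0 < a := by positivity
  have hb : 0 < b := by linarith
  set g : ℝ → ℝ := fun w => w^(a-1) * (1-w)^(b-1) with hg_def
  have pow_eq : ∀ s : ℝ, 0 < s → s * ((s^2)^(a-1) * (1-s^2)^(b-1)) =
      s^(2*j) * (1-s^2)^p := by
    intro s hspos
    have e1 : (s^2 : ℝ)^(a-1) = s^(2*(a-1)) := by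
      rw [← Real.rpow_natCast s 2, ← Real.rpow_mul hspos.le]
      norm_num
    have e2 : s * s^(2*(a-1)) = s^(2*j) := by
      have h1 : s * s^(2*(a-1)) = s^(1 + 2*(a-1)) := by
        rw [Real.rpow_add hspos, Real.rpow_one]
      rw [h1, show (1 + 2*(a-1) : ℝ) = ((2*j : ℕ) : ℝ) by push_cast [ha_def]; ring,
        Real.rpow_natCast]
    have e3 : ((1:ℝ) - s^2)^(b-1) = (1-s^2)^p := by rw [hb_def]; norm_num
    rw [e1, e3, ← e2]
    ring
  have hsub : (∫ s in (0:ℝ)..1, (2*s) • g (s^2)) = ∫ w in (0:ℝ)..1, g w := by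
    have key := intervalIntegral.integral_comp_smul_deriv''' (a := (0:ℝ)) (b := 1)
      (f := fun s => s^2) (f' := fun s => 2*s) (g := g)
      ((continuous_pow 2).continuousOn)
      (fun x _ => by
        simpa using ((hasDerivAt_pow 2 x).hasDerivWithinAt (s := Ioi x)))
      (fun w hw => ?_) ?_ ?_
    · simpa using key
    · -- continuity of g on image of Ioo
      obtain ⟨s, hs, rfl⟩ := hw
      have hs' : s ∈ Ioo (0:ℝ) 1 := by simpa using hs
      have hw1 : (0:ℝ) < s^2 := pow_pos hs'.1 2
      have hw2 : s^2 < 1 := by nlinarith [hs'.1, hs'.2]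
      refine ContinuousAt.continuousWithinAt ?_
      refine ContinuousAt.mul ?_ ?_
      · exact Real.continuousAt_rpow_const _ _ (Or.inl hw1.ne')
      · exact (Real.continuousAt_rpow_const _ _ (Or.inl (by linarith : (1:ℝ) - s^2 ≠ 0))).comp
          ((continuous_const.sub continuous_id).continuousAt)
    · -- integrability of g on image of uIcc
      refine (integrableOn_beta a b ha hb).mono_set ?_
      rintro w ⟨s, hs, rfl⟩
      rw [uIcc_of_le (by norm_num : (0:ℝ) ≤ 1)] at hs
      refine ⟨by positivity, ?_⟩
      show s^2 ≤ 1
      nlinarith [hs.1, hs.2]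
    · -- integrability of s ↦ 2s • g(s²)
      have base := (integrableOn_aux p hp j).const_mul 2
      rw [uIcc_of_le (by norm_num : (0:ℝ) ≤ 1)]
      refine base.congr ?_
      have h0 : ∀ᵐ x : ℝ ∂(volume.restrict (Icc 0 1)), x ≠ 0 := by
        refine ae_restrict_of_ae ?_
        rw [ae_iff]
        have : {x : ℝ | ¬x ≠ 0} = {(0:ℝ)} := by ext y; simp
        rw [this]
        exact measure_singleton 0
      filter_upwards [h0, ae_restrict_mem measurableSet_Icc] with s hs0 hs
      have hspos : 0 < s := lt_of_le_of_ne hs.1 (Ne.symm hs0)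
      show 2 * (s^(2*j) * (1-s^2)^p) = (2*s) * ((s^2)^(a-1) * (1-s^2)^(b-1))
      rw [mul_assoc, pow_eq s hspos]
  have hLHS : (∫ s in (0:ℝ)..1, (2*s) • g (s^2)) =
      2 * ∫ s in (0:ℝ)..1, s^(2*j) * (1-s^2)^p := by
    rw [← intervalIntegral.integral_const_mul]
    refine intervalIntegral.integral_congr_ae (ae_of_all _ fun s hs => ?_)
    rw [Set.uIoc_of_le (by norm_num : (0:ℝ) ≤ 1)] at hs
    show (2*s) * ((s^2)^(a-1) * (1-s^2)^(b-1)) = 2 * (s^(2*j) * (1-s^2)^p)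
    rw [mul_assoc, pow_eq s hs.1]
  have key2 : 2 * (∫ s in (0:ℝ)..1, s^(2*j) * (1-s^2)^p) =
      Real.Gamma a * Real.Gamma b / Real.Gamma (a+b) := by
    rw [← hLHS, hsub]
    exact real_beta a b ha hb
  have hG : (0:ℝ) < Real.Gamma (a+b) := Real.Gamma_pos_of_pos (by positivity)
  field_simp at key2 ⊢
  linarith

lemma summable_aux (u : ℝ) (hu : 0 ≤ u) :
    Summable (fun j : ℕ => (4*u)^j / ((Nat.factorial (2*j) : ℝ))) := by
  refine Summable.of_nonneg_of_le (fun j => by positivity) (fun j => ?_)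
    (Real.summable_pow_div_factorial (4*u))
  refine div_le_div_of_nonneg_left (by positivity) (by positivity) ?_
  exact_mod_cast Nat.factorial_le (by omega)

set_option maxHeartbeats 1000000 in
lemma main_repr (ν u : ℝ) (hν : -(1/2) < ν) (hu : 0 ≤ u) :
    |hankelKernel ν u| ≤ 1 / Real.Gamma (ν + 1) := by
  set p : ℝ := ν - 1/2 with hp_def
  have hp : -1 < p := by rw [hp_def]; linarith
  have hG : (0:ℝ) < Real.Gamma (ν + 1/2) := Real.Gamma_pos_of_pos (by linarith)
  have hG1 : (0:ℝ) < Real.Gamma (ν + 1) := Real.Gamma_pos_of_pos (by linarith)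
  have hπ : (0:ℝ) < √π := Real.sqrt_pos.mpr Real.pi_pos
  set K : ℝ := 2 / (√π * Real.Gamma (ν + 1/2)) with hK_def
  have hK : 0 < K := by positivity
  set F : ℕ → ℝ → ℝ := fun j s =>
    ((-1:ℝ)^j * (4*u)^j / ((Nat.factorial (2*j) : ℝ))) * (s^(2*j) * (1-s^2)^p) with hF_def
  have hF_int : ∀ j, Integrable (F j) (volume.restrict (Ioc (0:ℝ) 1)) := by
    intro j
    exact (((integrableOn_aux p hp j).mono_set Ioc_subset_Icc_self).const_mul _)
  have hBint : IntegrableOn (fun s : ℝ => (1-s^2)^p) (Ioc 0 1) := by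
    have := (integrableOn_aux p hp 0).mono_set (Ioc_subset_Icc_self (a := (0:ℝ)) (b := 1))
    simpa using this
  set B : ℝ := ∫ s in Ioc (0:ℝ) 1, (1-s^2)^p with hB_def
  have hB0 : 0 ≤ B := by
    refine setIntegral_nonneg measurableSet_Ioc fun s hs => Real.rpow_nonneg ?_ _
    nlinarith [hs.1, hs.2]
  have habs : ∀ j : ℕ, |(-1:ℝ)^j * (4*u)^j / ((Nat.factorial (2*j) : ℝ))| =
      (4*u)^j / ((Nat.factorial (2*j) : ℝ)) := by
    intro j
    rw [abs_div, abs_mul, abs_pow, abs_pow, abs_neg, abs_one, one_pow, one_mul,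
      abs_of_nonneg (by positivity : (0:ℝ) ≤ 4*u), Nat.abs_cast]
  have hF_sum : Summable (fun j : ℕ => ∫ s in Ioc (0:ℝ) 1, ‖F j s‖) := by
    refine Summable.of_nonneg_of_le
      (fun j => integral_nonneg fun s => norm_nonneg _) (fun j => ?_)
      ((summable_aux u hu).mul_right B)
    have hle : ∀ s ∈ Ioc (0:ℝ) 1, ‖F j s‖ ≤
        ((4*u)^j / ((Nat.factorial (2*j) : ℝ))) * (1-s^2)^p := by
      intro s hs
      have h1 : (0:ℝ) ≤ 1 - s^2 := by nlinarith [hs.1, hs.2]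
      have hnn : (0:ℝ) ≤ (1-s^2)^p := Real.rpow_nonneg h1 _
      have hFn : ‖F j s‖ = ((4*u)^j / ((Nat.factorial (2*j) : ℝ))) * (s^(2*j) * (1-s^2)^p) := by
        rw [hF_def, Real.norm_eq_abs, abs_mul,
          abs_of_nonneg (mul_nonneg (pow_nonneg hs.1.le _) hnn), habs j]
      rw [hFn]
      have hs1 : s^(2*j) ≤ 1 := pow_le_one₀ hs.1.le hs.2
      have : s^(2*j) * (1-s^2)^p ≤ 1 * (1-s^2)^p := mul_le_mul_of_nonneg_right hs1 hnn
      calc (4*u)^j / ((Nat.factorial (2*j):ℝ)) * (s^(2*j) * (1-s^2)^p)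
          ≤ (4*u)^j / ((Nat.factorial (2*j):ℝ)) * (1 * (1-s^2)^p) := by
            exact mul_le_mul_of_nonneg_left this (by positivity)
        _ = (4*u)^j / ((Nat.factorial (2*j):ℝ)) * (1-s^2)^p := by ring
    calc (∫ s in Ioc (0:ℝ) 1, ‖F j s‖)
        ≤ ∫ s in Ioc (0:ℝ) 1, ((4*u)^j / ((Nat.factorial (2*j) : ℝ))) * (1-s^2)^p := by
          refine integral_mono_of_nonneg (ae_of_all _ fun s => norm_nonneg _)
            (hBint.const_mul _) ?_
          filter_upwards [ae_restrict_mem measurableSet_Ioc] with s hs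
          exact hle s hs
      _ = ((4*u)^j / ((Nat.factorial (2*j) : ℝ))) * B := by
          rw [hB_def, integral_const_mul]
  have hinter := integral_tsum_of_summable_integral_norm hF_int hF_sum
  have hpt : ∀ s : ℝ, (∑' j, F j s) = Real.cos (2*√u*s) * (1-s^2)^p := by
    intro s
    have hterm : ∀ n : ℕ, F n s =
        ((-1:ℝ)^n * (2*√u*s)^(2*n) / ((Nat.factorial (2*n) : ℝ))) * (1-s^2)^p := by
      intro n
      have h2 : (2*√u*s)^(2*n) = (4*u)^n * s^(2*n) := by
        rw [pow_mul, pow_mul,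
          show (2*√u*s)^2 = 4*u*s^2 by rw [mul_pow, mul_pow, Real.sq_sqrt hu]; ring,
          mul_pow]
      rw [hF_def, h2]; ring
    rw [tsum_congr hterm, tsum_mul_right, ← Real.cos_eq_tsum]
  have hval : ∀ j : ℕ, (∫ s in Ioc (0:ℝ) 1, F j s) =
      ((-1:ℝ)^j * (4*u)^j / ((Nat.factorial (2*j) : ℝ))) *
        (Real.Gamma ((j:ℝ)+1/2) * Real.Gamma (p+1) /
          (2 * Real.Gamma (((j:ℝ)+1/2)+(p+1)))) := by
    intro j
    rw [hF_def]
    simp only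
    rw [integral_const_mul]
    congr 1
    rw [← intervalIntegral.integral_of_le (by norm_num : (0:ℝ) ≤ 1)]
    exact beta_sub p hp j
  have hterm2 : ∀ j : ℕ, (-1:ℝ)^j * u^j / ((Nat.factorial j : ℝ) * Real.Gamma (ν+1+j)) =
      K * ∫ s in Ioc (0:ℝ) 1, F j s := by
    intro j
    rw [hval j]
    have hargs : ((j:ℝ)+1/2)+(p+1) = ν+1+j := by rw [hp_def]; ring
    have hargs2 : p + 1 = ν + 1/2 := by rw [hp_def]; ring
    rw [hargs, hargs2, gamma_nat_add_half j, hK_def, mul_pow 4 u j]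
    set q : ℝ := (4:ℝ)^j with hq_def
    set r : ℝ := ((Nat.factorial j : ℝ)) with hr_def
    set r2 : ℝ := ((Nat.factorial (2*j) : ℝ)) with hr2_def
    set Γj : ℝ := Real.Gamma (ν+1+j) with hΓj_def
    have hfj : r ≠ 0 := by rw [hr_def]; positivity
    have hf2j : r2 ≠ 0 := by rw [hr2_def]; positivity
    have hjnn : (0:ℝ) ≤ (j:ℝ) := Nat.cast_nonneg j
    have hGj : Γj ≠ 0 := by
      rw [hΓj_def]; exact (Real.Gamma_pos_of_pos (by linarith)).ne'
    have h4 : q ≠ 0 := by rw [hq_def]; positivity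
    have hGc : Real.Gamma (1/2 + ν) ≠ 0 := by rw [add_comm]; exact hG.ne'
    have h14 : ((1:ℝ)/4)^j * 4^j = 1 := by rw [← mul_pow]; norm_num
    field_simp [hfj, hf2j, hGj, h4, hπ.ne', hGc]
    ring_nf
    rw [mul_comm] at h14
    rw [mul_assoc, mul_inv_cancel₀ hGc, mul_one]
  have hrepr : hankelKernel ν u =
      K * ∫ s in Ioc (0:ℝ) 1, Real.cos (2*√u*s) * (1-s^2)^p := by
    rw [hankelKernel, tsum_congr hterm2, tsum_mul_left, hinter]
    congr 1
    exact setIntegral_congr_fun measurableSet_Ioc (fun s _ => hpt s)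
  have hIb : |∫ s in Ioc (0:ℝ) 1, Real.cos (2*√u*s) * (1-s^2)^p| ≤ B := by
    rw [← Real.norm_eq_abs]
    refine norm_integral_le_of_norm_le hBint ?_
    filter_upwards [ae_restrict_mem measurableSet_Ioc] with s hs
    have h1 : (0:ℝ) ≤ 1 - s^2 := by nlinarith [hs.1, hs.2]
    have hnn : (0:ℝ) ≤ (1-s^2)^p := Real.rpow_nonneg h1 _
    rw [Real.norm_eq_abs, abs_mul, abs_of_nonneg hnn]
    calc |Real.cos (2*√u*s)| * (1-s^2)^p ≤ 1 * (1-s^2)^p :=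
          mul_le_mul_of_nonneg_right (Real.abs_cos_le_one _) hnn
      _ = (1-s^2)^p := one_mul _
  have hBval : B = √π * Real.Gamma (ν+1/2) / (2 * Real.Gamma (ν+1)) := by
    have h0 := beta_sub p hp 0
    have hargs : ((0:ℕ):ℝ)+1/2+(p+1) = ν+1 := by rw [hp_def]; push_cast; ring
    have hargs2 : p + 1 = ν + 1/2 := by rw [hp_def]; ring
    rw [hargs, hargs2] at h0
    rw [hB_def, ← intervalIntegral.integral_of_le (by norm_num : (0:ℝ) ≤ 1)]
    rw [show (∫ s in (0:ℝ)..1, (1-s^2)^p) = ∫ s in (0:ℝ)..1, s^(2*0) * (1-s^2)^p by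
      refine intervalIntegral.integral_congr fun s _ => ?_
      norm_num]
    rw [h0]
    norm_num [Real.Gamma_one_half_eq]
  rw [hrepr, abs_mul, abs_of_pos hK]
  refine le_trans (mul_le_mul_of_nonneg_left hIb hK.le) ?_
  rw [hBval]
  refine le_of_eq ?_
  rw [hK_def]
  have hGc : Real.Gamma (1/2 + ν) ≠ 0 := by rw [add_comm]; exact hG.ne'
  have hG1c : Real.Gamma (1 + ν) ≠ 0 := by rw [add_comm]; exact hG1.ne'
  field_simp
  have hx : (0:ℝ) < Real.Gamma ((ν*2+1)/2) := Real.Gamma_pos_of_pos (by linarith)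
  exact div_self (Real.Gamma_pos_of_pos (by linarith)).ne'

lemma edge_case (u : ℝ) (hu : 0 ≤ u) :
    |hankelKernel (-(1/2)) u| ≤ 1 / Real.Gamma (-(1/2) + 1) := by
  have hπ : (0:ℝ) < √π := Real.sqrt_pos.mpr Real.pi_pos
  have hrepr : hankelKernel (-(1/2)) u = Real.cos (2*√u) * (1/√π) := by
    rw [hankelKernel]
    have hterm : ∀ j : ℕ, (-1:ℝ)^j * u^j /
        ((Nat.factorial j : ℝ) * Real.Gamma (-(1/2) + 1 + j)) =
        ((-1:ℝ)^j * (2*√u)^(2*j) / ((Nat.factorial (2*j) : ℝ))) * (1/√π) := by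
      intro j
      have harg : (-(1/2) + 1 + (j:ℝ)) = (j:ℝ) + 1/2 := by ring
      rw [harg, gamma_nat_add_half j]
      have hpow : (2*√u)^(2*j) = 4^j * u^j := by
        rw [pow_mul, show (2*√u)^2 = 4*u by rw [mul_pow, Real.sq_sqrt hu]; ring, mul_pow]
      rw [hpow]
      set q : ℝ := (4:ℝ)^j with hq_def
      set r : ℝ := ((Nat.factorial j : ℝ)) with hr_def
      set r2 : ℝ := ((Nat.factorial (2*j) : ℝ)) with hr2_def
      have hfj : r ≠ 0 := by rw [hr_def]; positivity
      have hf2j : r2 ≠ 0 := by rw [hr2_def]; positivity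
      have h4 : q ≠ 0 := by rw [hq_def]; positivity
      field_simp
    rw [tsum_congr hterm, tsum_mul_right, ← Real.cos_eq_tsum]
  rw [hrepr, show (-(1/2) + 1 : ℝ) = 1/2 by norm_num, Real.Gamma_one_half_eq]
  rw [abs_mul, abs_of_pos (by positivity : (0:ℝ) < 1/√π)]
  calc |Real.cos (2*√u)| * (1/√π) ≤ 1 * (1/√π) :=
        mul_le_mul_of_nonneg_right (Real.abs_cos_le_one _) (by positivity)
    _ = 1/√π := one_mul _

/-- For `ν ≥ −1/2` and `t, x ≥ 0`, `|(tx)^{−ν/2} J_ν(2√(tx))| ≤ 1/Γ(ν+1)`,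
with the left side interpreted via the power series. -/
theorem abs_hankelKernel_le (ν t x : ℝ) (hν : -(1/2) ≤ ν) (ht : 0 ≤ t) (hx : 0 ≤ x) :
    |hankelKernel ν (t * x)| ≤ 1 / Real.Gamma (ν + 1) := by
  rcases eq_or_lt_of_le hν with h | h
  · subst h
    exact edge_case (t*x) (mul_nonneg ht hx)
  · exact main_repr ν (t*x) h (mul_nonneg ht hx)
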